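/- If X is a nonnegative random variable with NBUE distribution F and mean μ > 0, then for every r with 0 < r < 1, E[X^r] ≥ Γ(r+1)·μ^r. -/

import Mathlib

open MeasureTheory Set Filter ENNReal

lemma lintegral_tail_swap (w h : ℝ → ℝ≥0∞) (hw : Measurable w) (hh : Measurable h) :
    ∫⁻ t in Set.Ioi (0:ℝ), h t * ∫⁻ s in Set.Ioi t, w s =
      ∫⁻ s in Set.Ioi (0:ℝ), w s * ∫⁻ t in Set.Ioo 0 s, h t := by
  set F : ℝ × ℝ → ℝ≥0∞ := fun q => Set.indicator {q : ℝ × ℝ | q.1 < q.2} (fun q => h q.1 * w q.2) q with hF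
  have hFmeas : Measurable F :=
    ((hh.comp measurable_fst).mul (hw.comp measurable_snd)).indicator
      (measurableSet_lt measurable_fst measurable_snd)
  have step1 : ∫⁻ t in Set.Ioi (0:ℝ), h t * ∫⁻ s in Set.Ioi t, w s
      = ∫⁻ t in Set.Ioi (0:ℝ), ∫⁻ s, F (t, s) := by
    refine lintegral_congr fun t => ?_
    rw [← lintegral_const_mul (h t) hw, ← lintegral_indicator measurableSet_Ioi]
    refine lintegral_congr fun s => ?_
    by_cases hts : t < s <;> simp [hF, Set.indicator_apply, hts]
  have step2 : ∫⁻ t in Set.Ioi (0:ℝ), ∫⁻ s, F (t, s)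
      = ∫⁻ s, ∫⁻ t in Set.Ioi (0:ℝ), F (t, s) := by
    exact lintegral_lintegral_swap (hFmeas.aemeasurable)
  have step3 : ∀ s : ℝ, ∫⁻ t in Set.Ioi (0:ℝ), F (t, s)
      = w s * ∫⁻ t in Set.Ioo 0 s, h t := by
    intro s
    have heq : ∀ t : ℝ, F (t, s) = Set.indicator (Set.Iio s) (fun t => h t * w s) t := by
      intro t
      by_cases hts : t < s <;> simp [hF, Set.indicator_apply, hts]
    simp_rw [heq]
    rw [lintegral_indicator measurableSet_Iio, Measure.restrict_restrict measurableSet_Iio,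
      Set.Iio_inter_Ioi, lintegral_mul_const _ hh, mul_comm]
  have step4 : ∫⁻ s, ∫⁻ t in Set.Ioi (0:ℝ), F (t, s)
      = ∫⁻ s in Set.Ioi (0:ℝ), w s * ∫⁻ t in Set.Ioo 0 s, h t := by
    simp_rw [step3]
    rw [← lintegral_add_compl (fun s => w s * ∫⁻ t in Set.Ioo 0 s, h t) (measurableSet_Ioi (a := (0:ℝ)))]
    have : ∫⁻ s in (Set.Ioi (0:ℝ))ᶜ, w s * ∫⁻ t in Set.Ioo 0 s, h t = 0 := by
      rw [Set.compl_Ioi]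
      rw [setLIntegral_congr_fun measurableSet_Iic
        (fun s hs => ?_), lintegral_zero]
      rw [Set.Ioo_eq_empty (by exact fun hlt => absurd (hlt.trans_le hs) (lt_irrefl _))]
      simp
    rw [this, add_zero]
  rw [step1, step2, step4]

theorem nbue_moment_lower_bound
    {Ω : Type*} [MeasurableSpace Ω] (P : Measure Ω) [IsProbabilityMeasure P]
    (X : Ω → ℝ) (hXm : Measurable X) (hX0 : ∀ ω, 0 ≤ X ω)
    (hint : Integrable X P) (μ : ℝ) (hμdef : μ = ∫ ω, X ω ∂P) (hμ : 0 < μ)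
    (hNBUE : ∀ t ≥ (0:ℝ),
      ∫ x in Ioi t, (P {ω | x < X ω}).toReal ≤ μ * (P {ω | t < X ω}).toReal) :
    ∀ r : ℝ, 0 < r → r < 1 → Real.Gamma (r + 1) * μ ^ r ≤ ∫ ω, X ω ^ r ∂P := by
  intro r hr hr1
  -- notation
  set T : ℝ → ℝ≥0∞ := fun t => P {ω | t < X ω} with hT
  set g : ℝ → ℝ := fun t => (T t).toReal with hg
  set H : ℝ → ℝ := fun t => ∫ x in Ioi t, g x with hHdef
  have hTanti : Antitone T := fun a b hab =>
    measure_mono (fun ω h => lt_of_le_of_lt hab h)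
  have hTmeas : Measurable T := hTanti.measurable
  have hTne : ∀ t, T t ≠ ∞ := fun t => measure_ne_top P _
  have hgmeas : Measurable g := hTmeas.ennreal_toReal
  have hg0 : ∀ t, 0 ≤ g t := fun t => ENNReal.toReal_nonneg
  -- the mean as integral of the tail
  have hXnn : 0 ≤ᵐ[P] X := Filter.Eventually.of_forall hX0
  have hμeq : ∫ t in Ioi (0:ℝ), g t = μ := by
    rw [hμdef, hint.integral_eq_integral_meas_lt hXnn]
    rfl
  -- integrability of g on (0, ∞)
  have hlint : ∫⁻ t in Ioi (0:ℝ), ENNReal.ofReal (g t) = ∫⁻ t in Ioi (0:ℝ), T t := by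
    refine lintegral_congr fun t => ?_
    exact ENNReal.ofReal_toReal (hTne t)
  have hTlint : ∫⁻ t in Ioi (0:ℝ), T t < ∞ := by
    rw [← lintegral_eq_lintegral_meas_lt P hXnn hXm.aemeasurable]
    exact hint.lintegral_lt_top
  have hgint : IntegrableOn g (Ioi (0:ℝ)) := by
    refine ⟨hgmeas.aestronglyMeasurable.restrict, ?_⟩
    rw [hasFiniteIntegral_iff_ofReal (Filter.Eventually.of_forall hg0)]
    rw [hlint]; exact hTlint
  have hgintt : ∀ t : ℝ, 0 ≤ t → IntegrableOn g (Ioi t) :=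
    fun t ht => hgint.mono_set (Ioi_subset_Ioi ht)
  -- basic properties of H
  have hH0 : H 0 = μ := hμeq
  have hHnn : ∀ t, 0 ≤ H t := fun t =>
    setIntegral_nonneg measurableSet_Ioi (fun x _ => hg0 x)
  have hHanti : ∀ t s : ℝ, 0 ≤ t → t ≤ s → H s ≤ H t := by
    intro t s ht hts
    refine setIntegral_mono_set (hgintt t ht) (Filter.Eventually.of_forall hg0)
      (HasSubset.Subset.eventuallyLE (Ioi_subset_Ioi hts))
  have hsplit : ∀ t s : ℝ, 0 ≤ t → t ≤ s → H t = (∫ x in Ioc t s, g x) + H s := by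
    intro t s ht hts
    rw [hHdef]
    simp only
    rw [← Set.Ioc_union_Ioi_eq_Ioi hts]
    rw [setIntegral_union (Set.Ioc_disjoint_Ioi le_rfl) measurableSet_Ioi
      ((hgintt t ht).mono_set Set.Ioc_subset_Ioi_self)
      (hgintt s (ht.trans hts))]
  -- the key step inequality
  have hstep : ∀ t s : ℝ, 0 ≤ t → 0 ≤ s → H (t + s) * (1 + s / μ) ≤ H t := by
    intro t s ht hs
    have hconst : ∀ x ∈ Ioc t (t + s), H (t + s) / μ ≤ g x := by
      intro x hx
      have hx0 : 0 ≤ x := le_trans ht (le_of_lt hx.1)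
      have h1 : H x ≤ μ * g x := hNBUE x hx0
      have h2 : H (t + s) ≤ H x := hHanti x (t + s) hx0 hx.2
      rw [div_le_iff₀ hμ]
      calc H (t + s) ≤ H x := h2
        _ ≤ μ * g x := h1
        _ = g x * μ := mul_comm _ _
    have hm : (volume (Ioc t (t + s))).toReal = s := by
      rw [Real.volume_Ioc]
      simp [hs]
    have h3 : (H (t + s) / μ) * s ≤ ∫ x in Ioc t (t + s), g x := by
      have := setIntegral_ge_of_const_le measurableSet_Ioc
        (by rw [Real.volume_Ioc]; exact ENNReal.ofReal_ne_top) hconst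
        ((hgintt t ht).mono_set Set.Ioc_subset_Ioi_self)
      rw [measureReal_def, hm, smul_eq_mul] at this
      linarith
    have h4 := hsplit t (t + s) ht (by linarith)
    have : H (t + s) * (1 + s / μ) = H (t + s) + (H (t + s) / μ) * s := by
      field_simp
    rw [this, h4]
    linarith
  -- iterate: H (k * d) ≤ μ / (1 + d/μ)^k
  have hiter : ∀ d : ℝ, 0 ≤ d → ∀ k : ℕ, H (k * d) ≤ μ / (1 + d / μ) ^ k := by
    intro d hd k
    induction k with
    | zero => simp [hH0]
    | succ k ih =>
      have h1 : (0:ℝ) < 1 + d / μ := by positivity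
      have h2 : ((k:ℝ) + 1) * d = k * d + d := by ring
      have h3 := hstep (k * d) d (by positivity) hd
      rw [le_div_iff₀ (pow_pos h1 (k + 1)), pow_succ]
      push_cast
      rw [h2]
      calc H (k * d + d) * ((1 + d / μ) ^ k * (1 + d / μ))
          = (H (k * d + d) * (1 + d / μ)) * (1 + d / μ) ^ k := by ring
        _ ≤ H (k * d) * (1 + d / μ) ^ k := by
            exact mul_le_mul_of_nonneg_right h3 (le_of_lt (pow_pos h1 k))
        _ ≤ (μ / (1 + d / μ) ^ k) * (1 + d / μ) ^ k := by
            exact mul_le_mul_of_nonneg_right ih (le_of_lt (pow_pos h1 k))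
        _ = μ := div_mul_cancel₀ μ (ne_of_gt (pow_pos h1 k))
  -- exponential bound on H
  have hHexp : ∀ t : ℝ, 0 ≤ t → H t ≤ μ * Real.exp (-(t / μ)) := by
    intro t ht
    have hkey : ∀ n : ℕ, 1 ≤ n → H t ≤ μ / (1 + (t / μ) / n) ^ n := by
      intro n hn
      have hn0 : (n:ℝ) ≠ 0 := Nat.cast_ne_zero.mpr (by omega)
      have := hiter (t / n) (by positivity) n
      rw [mul_div_cancel₀ t hn0] at this
      convert this using 4
      rw [div_div, div_div, mul_comm]
    have htend : Tendsto (fun n : ℕ => μ / (1 + (t / μ) / n) ^ n) atTop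
        (nhds (μ * Real.exp (-(t / μ)))) := by
      have h1 := Real.tendsto_one_add_div_pow_exp (t / μ)
      have h2 : μ * Real.exp (-(t / μ)) = μ / Real.exp (t / μ) := by
        rw [Real.exp_neg]; ring
      rw [h2]
      exact tendsto_const_nhds.div h1 (Real.exp_ne_zero _)
    refine ge_of_tendsto htend ?_
    filter_upwards [eventually_ge_atTop 1] with n hn using hkey n hn
  -- cumulative lower bound
  have hcum : ∀ s : ℝ, 0 ≤ s → μ - μ * Real.exp (-(s / μ)) ≤ ∫ t in Ioc 0 s, g t := by
    intro s hs
    have := hsplit 0 s le_rfl hs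
    rw [hH0] at this
    have := hHexp s hs
    linarith
  -- ENNReal-valued weights
  set E : ℝ → ℝ≥0∞ := fun t => ENNReal.ofReal (Real.exp (-(t / μ))) with hE
  set w : ℝ → ℝ≥0∞ := fun s => ENNReal.ofReal ((1 - r) * s ^ (r - 2)) with hw
  have hEmeas : Measurable E := by fun_prop
  have hwmeas : Measurable w := by
    apply Measurable.ennreal_ofReal
    fun_prop
  have hrpow_meas : Measurable (fun t : ℝ => ENNReal.ofReal (t ^ (r - 1))) := by
    apply Measurable.ennreal_ofReal
    fun_prop
  -- tail integral of the weight w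
  have hwtail : ∀ t : ℝ, t ∈ Ioi (0:ℝ) → ∫⁻ s in Ioi t, w s = ENNReal.ofReal (t ^ (r - 1)) := by
    intro t ht
    rw [mem_Ioi] at ht
    have hlt : r - 2 < -1 := by linarith
    have hwint : IntegrableOn (fun s : ℝ => (1 - r) * s ^ (r - 2)) (Ioi t) :=
      (integrableOn_Ioi_rpow_of_lt hlt ht).const_mul (1 - r)
    have hnn : 0 ≤ᵐ[volume.restrict (Ioi t)] fun s : ℝ => (1 - r) * s ^ (r - 2) := by
      filter_upwards [ae_restrict_mem measurableSet_Ioi] with s hs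
      have : (0:ℝ) < s := ht.trans hs
      have h2 := Real.rpow_nonneg this.le (r - 2)
      have h3 : (0:ℝ) ≤ 1 - r := by linarith
      exact mul_nonneg h3 h2
    rw [← ofReal_integral_eq_lintegral_ofReal hwint hnn]
    congr 1
    rw [MeasureTheory.integral_const_mul, integral_Ioi_rpow_of_lt hlt ht]
    have h21 : r - 2 + 1 = r - 1 := by ring
    rw [h21]
    have hne : r - 1 ≠ 0 := by linarith
    field_simp
    ring
  -- comparison of the cumulatives
  have hcomp : ∀ s : ℝ, s ∈ Ioi (0:ℝ) →
      ∫⁻ t in Ioo 0 s, E t ≤ ∫⁻ t in Ioo 0 s, T t := by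
    intro s hs
    rw [mem_Ioi] at hs
    have hEint : IntegrableOn (fun t : ℝ => Real.exp (-(t / μ))) (Ioo 0 s) := by
      refine (Continuous.integrableOn_Ioc ?_).mono_set Set.Ioo_subset_Ioc_self
      fun_prop
    have hEnn : 0 ≤ᵐ[volume.restrict (Ioo 0 s)] fun t : ℝ => Real.exp (-(t / μ)) :=
      Filter.Eventually.of_forall fun t => (Real.exp_pos _).le
    have hEval : ∫ t in Ioo 0 s, Real.exp (-(t / μ)) = μ - μ * Real.exp (-(s / μ)) := by
      rw [← integral_Ioc_eq_integral_Ioo, ← intervalIntegral.integral_of_le hs.le]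
      have hrw : ∀ x : ℝ, Real.exp (-(x / μ)) = Real.exp (x / (-μ)) := by
        intro x; rw [div_neg]
      simp_rw [hrw]
      rw [intervalIntegral.integral_comp_div (f := Real.exp) (neg_ne_zero.mpr hμ.ne'),
        integral_exp]
      simp only [zero_div, Real.exp_zero, smul_eq_mul]
      ring
    have hleft : ∫⁻ t in Ioo 0 s, E t = ENNReal.ofReal (μ - μ * Real.exp (-(s / μ))) := by
      rw [← ofReal_integral_eq_lintegral_ofReal hEint hEnn, hEval]
    have hright : ENNReal.ofReal (∫ t in Ioc 0 s, g t) = ∫⁻ t in Ioo 0 s, T t := by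
      rw [integral_Ioc_eq_integral_Ioo,
        ofReal_integral_eq_lintegral_ofReal (hgint.mono_set Set.Ioo_subset_Ioi_self)
          (Filter.Eventually.of_forall hg0)]
      refine lintegral_congr fun t => ENNReal.ofReal_toReal (hTne t)
    rw [hleft, ← hright]
    exact ENNReal.ofReal_le_ofReal (hcum s hs.le)
  -- layer cake for X^r
  have hXrnn : 0 ≤ᵐ[P] fun ω => X ω ^ r :=
    Filter.Eventually.of_forall fun ω => Real.rpow_nonneg (hX0 ω) r
  have hlc : ∫⁻ ω, ENNReal.ofReal (X ω ^ r) ∂P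
      = ∫⁻ t in Ioi (0:ℝ), T t * ENNReal.ofReal (r * t ^ (r - 1)) := by
    have h1 : ∀ ω, X ω ^ r = ∫ t in (0:ℝ)..(X ω), r * t ^ (r - 1) := by
      intro ω
      rw [intervalIntegral.integral_const_mul, integral_rpow (Or.inl (by linarith))]
      have : r - 1 + 1 = r := by ring
      rw [this, Real.zero_rpow hr.ne']
      field_simp
      simp
    have h2 := lintegral_comp_eq_lintegral_meas_lt_mul P hXnn hXm.aemeasurable
      (g := fun t => r * t ^ (r - 1))
      (fun t _ => (intervalIntegral.intervalIntegrable_rpow' (by linarith)).const_mul r)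
      (by
        filter_upwards [ae_restrict_mem measurableSet_Ioi] with t ht
        have := Real.rpow_nonneg (le_of_lt (mem_Ioi.mp ht)) (r - 1)
        positivity)
    simp_rw [← h1] at h2
    exact h2
  -- integrability of X^r
  have hXrmeas : Measurable fun ω => X ω ^ r := by fun_prop
  have hXrint : Integrable (fun ω => X ω ^ r) P := by
    refine ((integrable_const (1:ℝ)).add hint).mono' hXrmeas.aestronglyMeasurable ?_
    refine Filter.Eventually.of_forall fun ω => ?_
    simp only [Pi.add_apply]
    rw [Real.norm_eq_abs, abs_of_nonneg (Real.rpow_nonneg (hX0 ω) r)]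
    rcases le_or_gt (X ω) 1 with h | h
    · have := Real.rpow_le_one (hX0 ω) h hr.le
      linarith [hX0 ω]
    · have h2 : X ω ^ r ≤ X ω ^ (1:ℝ) :=
        Real.rpow_le_rpow_of_exponent_le h.le hr1.le
      rw [Real.rpow_one] at h2
      linarith
  -- Gamma integral for the exponential
  have hgamma_int : IntegrableOn (fun t : ℝ => t ^ (r - 1) * Real.exp (-(μ⁻¹ * t))) (Ioi 0) := by
    have hI1 : IntegrableOn (fun t : ℝ => t ^ (r - 1) * Real.exp (-(μ⁻¹ * t))) (Ioc 0 1) := by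
      have hbase : IntegrableOn (fun t : ℝ => t ^ (r - 1)) (Ioc 0 1) := by
        have := intervalIntegral.intervalIntegrable_rpow' (a := 0) (b := 1) (r := r - 1) (by linarith)
        rwa [intervalIntegrable_iff_integrableOn_Ioc_of_le zero_le_one] at this
      refine hbase.mono'
        ((show Measurable fun t : ℝ => t ^ (r - 1) * Real.exp (-(μ⁻¹ * t)) by
          fun_prop).aestronglyMeasurable) ?_
      filter_upwards [ae_restrict_mem measurableSet_Ioc] with t ht
      rw [Real.norm_eq_abs, abs_mul, abs_of_nonneg (Real.rpow_nonneg ht.1.le _),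
        abs_of_nonneg (Real.exp_pos _).le]
      have h1 : Real.exp (-(μ⁻¹ * t)) ≤ 1 := by
        rw [Real.exp_le_one_iff]
        have : 0 ≤ μ⁻¹ * t := mul_nonneg (inv_nonneg.mpr hμ.le) ht.1.le
        linarith
      nlinarith [Real.rpow_nonneg ht.1.le (r - 1)]
    have hI2 : IntegrableOn (fun t : ℝ => t ^ (r - 1) * Real.exp (-(μ⁻¹ * t))) (Ioi 1) := by
      refine (exp_neg_integrableOn_Ioi 1 (inv_pos.mpr hμ)).mono'
        ((show Measurable fun t : ℝ => t ^ (r - 1) * Real.exp (-(μ⁻¹ * t)) by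
          fun_prop).aestronglyMeasurable) ?_
      filter_upwards [ae_restrict_mem measurableSet_Ioi] with t ht
      rw [mem_Ioi] at ht
      rw [Real.norm_eq_abs, abs_mul, abs_of_nonneg (Real.rpow_nonneg (by linarith) _),
        abs_of_nonneg (Real.exp_pos _).le]
      have h1 : t ^ (r - 1) ≤ 1 :=
        Real.rpow_le_one_of_one_le_of_nonpos ht.le (by linarith)
      have h2 : -μ⁻¹ * t = -(μ⁻¹ * t) := by ring
      rw [h2]
      nlinarith [Real.exp_pos (-(μ⁻¹ * t))]
    have := hI1.union hI2
    rwa [Set.Ioc_union_Ioi_eq_Ioi zero_le_one] at this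
  have hgamma_val : ∫ t in Ioi (0:ℝ), t ^ (r - 1) * Real.exp (-(μ⁻¹ * t))
      = μ ^ r * Real.Gamma r := by
    rw [Real.integral_rpow_mul_exp_neg_mul_Ioi hr (inv_pos.mpr hμ), one_div, inv_inv]
  have hkey4 : ∫⁻ t in Ioi (0:ℝ), E t * ENNReal.ofReal (t ^ (r - 1))
      = ENNReal.ofReal (μ ^ r * Real.Gamma r) := by
    have hcongr : ∀ t : ℝ, t ∈ Ioi (0:ℝ) →
        E t * ENNReal.ofReal (t ^ (r - 1))
          = ENNReal.ofReal (t ^ (r - 1) * Real.exp (-(μ⁻¹ * t))) := by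
      intro t ht
      rw [mem_Ioi] at ht
      rw [hE]
      simp only
      rw [← ENNReal.ofReal_mul (Real.exp_pos _).le, mul_comm]
      congr 2
      rw [inv_mul_eq_div]
    rw [setLIntegral_congr_fun measurableSet_Ioi hcongr,
      ← ofReal_integral_eq_lintegral_ofReal hgamma_int ?_, hgamma_val]
    filter_upwards [ae_restrict_mem measurableSet_Ioi] with t ht
    have := Real.rpow_nonneg (le_of_lt (mem_Ioi.mp ht)) (r - 1)
    positivity
  -- the central comparison
  have hcentral : ∫⁻ t in Ioi (0:ℝ), E t * ENNReal.ofReal (t ^ (r - 1))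
      ≤ ∫⁻ t in Ioi (0:ℝ), T t * ENNReal.ofReal (t ^ (r - 1)) := by
    have hErw : ∫⁻ t in Ioi (0:ℝ), E t * ENNReal.ofReal (t ^ (r - 1))
        = ∫⁻ t in Ioi (0:ℝ), E t * ∫⁻ s in Ioi t, w s :=
      setLIntegral_congr_fun measurableSet_Ioi
        (fun t ht => by rw [hwtail t ht])
    have hTrw : ∫⁻ t in Ioi (0:ℝ), T t * ENNReal.ofReal (t ^ (r - 1))
        = ∫⁻ t in Ioi (0:ℝ), T t * ∫⁻ s in Ioi t, w s :=
      setLIntegral_congr_fun measurableSet_Ioi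
        (fun t ht => by rw [hwtail t ht])
    rw [hErw, hTrw, lintegral_tail_swap w E hwmeas hEmeas,
      lintegral_tail_swap w T hwmeas hTmeas]
    refine lintegral_mono_ae ?_
    filter_upwards [ae_restrict_mem measurableSet_Ioi] with s hs
    exact mul_le_mul_right (hcomp s hs) (w s)
  -- pulling out the constant r
  have hpull : ∫⁻ t in Ioi (0:ℝ), T t * ENNReal.ofReal (r * t ^ (r - 1))
      = ENNReal.ofReal r * ∫⁻ t in Ioi (0:ℝ), T t * ENNReal.ofReal (t ^ (r - 1)) := by
    rw [← lintegral_const_mul (ENNReal.ofReal r) (f := fun t => T t * ENNReal.ofReal (t ^ (r - 1))) (hTmeas.mul hrpow_meas)]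
    refine lintegral_congr fun t => ?_
    rw [ENNReal.ofReal_mul hr.le]
    ring
  -- put everything together
  have hmain : ENNReal.ofReal (Real.Gamma (r + 1) * μ ^ r)
      ≤ ∫⁻ ω, ENNReal.ofReal (X ω ^ r) ∂P := by
    rw [hlc, hpull]
    calc ENNReal.ofReal (Real.Gamma (r + 1) * μ ^ r)
        = ENNReal.ofReal r * ENNReal.ofReal (μ ^ r * Real.Gamma r) := by
          rw [← ENNReal.ofReal_mul hr.le]
          congr 1
          rw [Real.Gamma_add_one hr.ne']
          ring
      _ = ENNReal.ofReal r * ∫⁻ t in Ioi (0:ℝ), E t * ENNReal.ofReal (t ^ (r - 1)) := by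
          rw [hkey4]
      _ ≤ ENNReal.ofReal r * ∫⁻ t in Ioi (0:ℝ), T t * ENNReal.ofReal (t ^ (r - 1)) :=
          mul_le_mul_right hcentral _
  have hfin : ∫⁻ ω, ENNReal.ofReal (X ω ^ r) ∂P ≠ ∞ := hXrint.lintegral_lt_top.ne
  have hfinal := ENNReal.toReal_mono hfin hmain
  rw [ENNReal.toReal_ofReal (by positivity)] at hfinal
  rwa [integral_eq_lintegral_of_nonneg_ae hXrnn hXrmeas.aestronglyMeasurable,
    ← hg] at *
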